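/- Let r ≥ 2, set ℓ = ⌈r/2⌉, and let a_2, …, a_r ∈ ℂ[z] be polynomials. Let f = λ^r + Σ_{i=2}^{r} z^{⌊(i+1)/2⌋} a_i(z) λ^{r−i} ∈ ℂ[z, λ], and let A = ℂ[z, λ]/(f). Then in the localization of A away from the image of z, the element (image of λ²)·(image of z)⁻¹, i.e. λ²/z, is integral over A: it satisfies a monic polynomial of degree ℓ with coefficients in (the image of) A. -/

import Mathlib

open Polynomial in
private lemma aux_merge (p q : Polynomial ℂ) (m n : ℕ) :
    Polynomial.C p * Polynomial.X ^ m * Polynomial.C q * Polynomial.X ^ n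
      = Polynomial.C (q * p) * Polynomial.X ^ (m + n) := by
  rw [map_mul, pow_add]; ring

private lemma aux_aeval {A S : Type*} [CommRing A] [CommRing S] [Algebra A S]
    (z w : A) (t : S) (ht : t * algebraMap A S z = algebraMap A S w)
    (hu : IsUnit (algebraMap A S z)) (ℓ : ℕ) (n : Finset ℕ) (c : ℕ → A) (e : ℕ → ℕ)
    (he : ∀ i ∈ n, e i ≤ ℓ)
    (hid : w ^ ℓ + ∑ i ∈ n, c i * z ^ e i * w ^ (ℓ - e i) = 0) :
    Polynomial.aeval t
      (Polynomial.X ^ ℓ + ∑ i ∈ n, Polynomial.C (c i) * Polynomial.X ^ (ℓ - e i)) = 0 := by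
  have hk : ∀ k : ℕ, algebraMap A S z ^ k * t ^ k = algebraMap A S (w ^ k) := by
    intro k
    rw [map_pow]
    calc algebraMap A S z ^ k * t ^ k = (t * algebraMap A S z) ^ k := by ring
      _ = _ := by rw [ht]
  apply (IsUnit.mul_right_eq_zero (hu.pow ℓ)).mp
  rw [map_add, map_pow, Polynomial.aeval_X, map_sum, mul_add, Finset.mul_sum, hk ℓ]
  have hterm : ∀ i ∈ n, algebraMap A S z ^ ℓ *
      Polynomial.aeval t (Polynomial.C (c i) * Polynomial.X ^ (ℓ - e i))
      = algebraMap A S (c i * z ^ e i * w ^ (ℓ - e i)) := by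
    intro i hi
    rw [map_mul, Polynomial.aeval_C, map_pow, Polynomial.aeval_X]
    have hsplit : algebraMap A S z ^ ℓ
        = algebraMap A S z ^ e i * algebraMap A S z ^ (ℓ - e i) := by
      rw [← pow_add]
      congr 1
      have := he i hi
      omega
    calc algebraMap A S z ^ ℓ * (algebraMap A S (c i) * t ^ (ℓ - e i))
        = algebraMap A S (c i) * algebraMap A S z ^ e i *
            (algebraMap A S z ^ (ℓ - e i) * t ^ (ℓ - e i)) := by rw [hsplit]; ring
      _ = algebraMap A S (c i * z ^ e i * w ^ (ℓ - e i)) := by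
          rw [hk, ← map_pow, ← map_mul, ← map_mul]
  rw [Finset.sum_congr rfl hterm, ← map_sum, ← map_add, hid, map_zero]

/-- Integrality of `λ²/z` on the normalization of a spectral curve near a marked point.
Here `f = λ^r + Σ_{i=2}^r z^⌊(i+1)/2⌋ a_i(z) λ^{r-i}` is the local equation of the spectral
curve (written in `ℂ[z][λ]`, with `λ` the outer variable), `A = ℂ[z,λ]/(f)` is its local
coordinate ring, and in the localization of `A` away from `z` the element `λ²/z` satisfies
a monic polynomial of degree `ℓ = ⌈r/2⌉` with coefficients in (the image of) `A`. -/
theorem lambda_sq_over_z_integral (r : ℕ) (hr : 2 ≤ r) (a : ℕ → Polynomial ℂ)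
    (f : Polynomial (Polynomial ℂ))
    (hf : f = Polynomial.X ^ r +
        ∑ i ∈ Finset.Icc 2 r,
          Polynomial.C (Polynomial.X ^ ((i + 1) / 2) * a i) * Polynomial.X ^ (r - i)) :
    ∀ t : Localization.Away
        ((Ideal.Quotient.mk (Ideal.span {f})) (Polynomial.C Polynomial.X)),
      t * @algebraMap ((Polynomial (Polynomial ℂ)) ⧸ Ideal.span {f}) _ _ _ OreLocalization.instAlgebra
            ((Ideal.Quotient.mk (Ideal.span {f})) (Polynomial.C Polynomial.X)) =
          @algebraMap ((Polynomial (Polynomial ℂ)) ⧸ Ideal.span {f}) _ _ _ OreLocalization.instAlgebra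
            ((Ideal.Quotient.mk (Ideal.span {f})) (Polynomial.X ^ 2)) →
        ∃ q : Polynomial ((Polynomial (Polynomial ℂ)) ⧸ Ideal.span {f}),
          q.Monic ∧ q.natDegree = (r + 1) / 2 ∧ Polynomial.aeval (R := (Polynomial (Polynomial ℂ)) ⧸ Ideal.span {f}) t q = 0 := by
  classical
  intro t ht
  -- f is monic of degree r, so the quotient is nontrivial
  have hslt : (∑ i ∈ Finset.Icc 2 r,
      Polynomial.C (Polynomial.X ^ ((i + 1) / 2) * a i) * Polynomial.X ^ (r - i)).degree
      < ((r : ℕ) : WithBot ℕ) := by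
    refine lt_of_le_of_lt (Polynomial.degree_sum_le _ _) ?_
    rw [Finset.sup_lt_iff (by exact_mod_cast WithBot.bot_lt_coe r)]
    intro i hi
    obtain ⟨h2, hir⟩ := Finset.mem_Icc.mp hi
    refine lt_of_le_of_lt (Polynomial.degree_C_mul_X_pow_le _ _) ?_
    exact_mod_cast Nat.sub_lt (by omega) (by omega)
  have hfM : f.Monic := by
    rw [hf]; exact Polynomial.monic_X_pow_add hslt
  have hfdeg : f.natDegree = r := by
    rw [hf, Polynomial.natDegree_eq_of_degree_eq_some]
    rw [Polynomial.degree_add_eq_left_of_degree_lt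
      (by rwa [Polynomial.degree_X_pow]), Polynomial.degree_X_pow]
  have hItop : Ideal.span {f} ≠ ⊤ := by
    rw [Ne, Ideal.span_singleton_eq_top]
    intro hu
    have := Polynomial.natDegree_eq_zero_of_isUnit hu
    omega
  haveI : Nontrivial ((Polynomial (Polynomial ℂ)) ⧸ Ideal.span {f}) :=
    Ideal.Quotient.nontrivial_iff.mpr hItop
  have hmkf : Ideal.Quotient.mk (Ideal.span {f}) f = 0 := by
    rw [Ideal.Quotient.eq_zero_iff_mem]
    exact Ideal.mem_span_singleton_self f
  refine ⟨Polynomial.X ^ ((r + 1) / 2) + ∑ i ∈ Finset.Icc 2 r,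
      Polynomial.C ((Ideal.Quotient.mk (Ideal.span {f}))
        (Polynomial.C (a i) * Polynomial.X ^ (i % 2))) *
        Polynomial.X ^ ((r + 1) / 2 - (i + 1) / 2), ?_, ?_, ?_⟩
  all_goals
    have hqlt : (∑ i ∈ Finset.Icc 2 r,
        Polynomial.C ((Ideal.Quotient.mk (Ideal.span {f}))
          (Polynomial.C (a i) * Polynomial.X ^ (i % 2))) *
          Polynomial.X ^ ((r + 1) / 2 - (i + 1) / 2)).degree
        < (Polynomial.X ^ ((r + 1) / 2) :
            Polynomial ((Polynomial (Polynomial ℂ)) ⧸ Ideal.span {f})).degree := by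
      rw [Polynomial.degree_X_pow]
      refine lt_of_le_of_lt (Polynomial.degree_sum_le _ _) ?_
      rw [Finset.sup_lt_iff (by exact_mod_cast WithBot.bot_lt_coe ((r + 1) / 2))]
      intro i hi
      obtain ⟨h2, hir⟩ := Finset.mem_Icc.mp hi
      refine lt_of_le_of_lt (Polynomial.degree_C_mul_X_pow_le _ _) ?_
      exact_mod_cast Nat.sub_lt (by omega) (by omega)
  · exact (Polynomial.monic_X_pow _).add_of_left hqlt
  · rw [Polynomial.natDegree_eq_of_degree_eq_some]
    rw [Polynomial.degree_add_eq_left_of_degree_lt hqlt, Polynomial.degree_X_pow]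
  · -- the key polynomial identity in ℂ[z][λ]
    have hbig : ((Polynomial.X : Polynomial (Polynomial ℂ)) ^ 2) ^ ((r + 1) / 2) +
        ∑ i ∈ Finset.Icc 2 r,
          (Polynomial.C (a i) * Polynomial.X ^ (i % 2)) *
            Polynomial.C (Polynomial.X ^ ((i + 1) / 2)) *
            ((Polynomial.X : Polynomial (Polynomial ℂ)) ^ 2) ^ ((r + 1) / 2 - (i + 1) / 2)
        = f * Polynomial.X ^ (r % 2) := by
      rw [hf, add_mul, Finset.sum_mul]
      refine congrArg₂ (· + ·) ?_ ?_
      · rw [← pow_mul, ← pow_add]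
        congr 1
        omega
      · refine Finset.sum_congr rfl fun i hi => ?_
        obtain ⟨h2, hir⟩ := Finset.mem_Icc.mp hi
        have hex : i % 2 + 2 * ((r + 1) / 2 - (i + 1) / 2) = (r - i) + r % 2 := by omega
        calc Polynomial.C (a i) * Polynomial.X ^ (i % 2) *
              Polynomial.C (Polynomial.X ^ ((i + 1) / 2)) *
              ((Polynomial.X : Polynomial (Polynomial ℂ)) ^ 2) ^ ((r + 1) / 2 - (i + 1) / 2)
            = Polynomial.C (a i) * Polynomial.X ^ (i % 2) *
              Polynomial.C (Polynomial.X ^ ((i + 1) / 2)) *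
              Polynomial.X ^ (2 * ((r + 1) / 2 - (i + 1) / 2)) := by rw [← pow_mul]
          _ = Polynomial.C (Polynomial.X ^ ((i + 1) / 2) * a i) *
              Polynomial.X ^ (i % 2 + 2 * ((r + 1) / 2 - (i + 1) / 2)) := aux_merge _ _ _ _
          _ = Polynomial.C (Polynomial.X ^ ((i + 1) / 2) * a i) *
              Polynomial.X ^ ((r - i) + r % 2) := by rw [hex]
          _ = Polynomial.C (Polynomial.X ^ ((i + 1) / 2) * a i) *
              Polynomial.X ^ (r - i) * Polynomial.X ^ (r % 2) := by
              rw [pow_add, mul_assoc]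
    -- the corresponding identity in the quotient ring
    have h0 : (Ideal.Quotient.mk (Ideal.span {f}) (Polynomial.X ^ 2)) ^ ((r + 1) / 2) +
        ∑ i ∈ Finset.Icc 2 r,
          (Ideal.Quotient.mk (Ideal.span {f}) (Polynomial.C (a i) * Polynomial.X ^ (i % 2))) *
            (Ideal.Quotient.mk (Ideal.span {f}) (Polynomial.C Polynomial.X)) ^ ((i + 1) / 2) *
            (Ideal.Quotient.mk (Ideal.span {f}) (Polynomial.X ^ 2)) ^
              ((r + 1) / 2 - (i + 1) / 2) = 0 := by
      simp only [← map_pow, ← map_mul, ← map_sum, ← map_add]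
      rw [hbig, Ideal.Quotient.eq_zero_iff_mem]; exact Ideal.mul_mem_right _ _ (Ideal.mem_span_singleton_self f)
    have key := aux_aeval (A := (Polynomial (Polynomial ℂ)) ⧸ Ideal.span {f}) (S := Localization.Away
        ((Ideal.Quotient.mk (Ideal.span {f})) (Polynomial.C Polynomial.X))) _ _ t (by exact ht)
      (IsLocalization.Away.algebraMap_isUnit (S := Localization.Away ((Ideal.Quotient.mk (Ideal.span {f})) (Polynomial.C Polynomial.X)))
        ((Ideal.Quotient.mk (Ideal.span {f})) (Polynomial.C Polynomial.X)))
      ((r + 1) / 2) (Finset.Icc 2 r)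
      (fun i => (Ideal.Quotient.mk (Ideal.span {f})) (Polynomial.C (a i) * Polynomial.X ^ (i % 2)))
      (fun i => (i + 1) / 2)
      (fun i hi => by
        obtain ⟨h2, hir⟩ := Finset.mem_Icc.mp hi
        show (i + 1) / 2 ≤ (r + 1) / 2
        omega) h0
    exact key
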